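/- Let Σ₁ ⊆ ℝ² be open, z₁ ∈ Σ₁, z₂ ∈ ℝ², and let P : Σ₁ → ℝ² be differentiable at z₁ with P(z₁) = z₂. Let α₁, α₂ : (−1,1) → ℝ² be curves differentiable at 0 with α₁(0) = z₁, α₂(0) = z₂ and α₂′(0) ≠ 0. Suppose there are sequences (s_n), (t_n) of nonzero real numbers with s_n → 0, t_n → 0, α₁(s_n) ≠ z₁ for all n, and P(α₁(s_n)) = α₂(t_n) for all n. Then the derivative DP(z₁) maps α₁′(0) into the line ℝ·α₂′(0), i.e. DP(z₁)(α₁′(0)) is a real scalar multiple of α₂′(0). -/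

import Mathlib

open Set Filter

/-- **Invariant subspaces for derivatives of holonomy maps, item 1.**
If `P` is differentiable at `z₁` with `P z₁ = z₂`, `α₁, α₂` are curves through `z₁, z₂`
differentiable at `0` with `α₂′(0) ≠ 0`, and there are sequences of nonzero parameters
`s n → 0`, `t n → 0` with `α₁ (s n) ≠ z₁` and `P (α₁ (s n)) = α₂ (t n)` for all `n`,
then `DP(z₁)` sends `α₁′(0)` into the line `ℝ • α₂′(0)`. -/
theorem holonomy_derivative_maps_tangent_line
    (S₁ : Set (ℝ × ℝ)) (hS₁ : IsOpen S₁)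
    (z₁ z₂ : ℝ × ℝ) (hz₁ : z₁ ∈ S₁)
    (P : ℝ × ℝ → ℝ × ℝ) (P' : (ℝ × ℝ) →L[ℝ] ℝ × ℝ)
    (hP : HasFDerivAt P P' z₁) (hPz : P z₁ = z₂)
    (α₁ α₂ : ℝ → ℝ × ℝ) (v₁ v₂ : ℝ × ℝ)
    (hα₁ : HasDerivAt α₁ v₁ 0) (hα₂ : HasDerivAt α₂ v₂ 0)
    (hα₁0 : α₁ 0 = z₁) (hα₂0 : α₂ 0 = z₂) (hv₂ : v₂ ≠ 0)
    (hα₁S : ∀ s ∈ Set.Ioo (-1 : ℝ) 1, α₁ s ∈ S₁)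
    (s t : ℕ → ℝ)
    (hs0 : ∀ n, s n ≠ 0) (ht0 : ∀ n, t n ≠ 0)
    (hsI : ∀ n, s n ∈ Set.Ioo (-1 : ℝ) 1) (htI : ∀ n, t n ∈ Set.Ioo (-1 : ℝ) 1)
    (hs : Tendsto s atTop (nhds 0)) (ht : Tendsto t atTop (nhds 0))
    (hne : ∀ n, α₁ (s n) ≠ z₁)
    (hPα : ∀ n, P (α₁ (s n)) = α₂ (t n)) :
    ∃ r : ℝ, P' v₁ = r • v₂ := by
  rw [← hα₁0] at hP
  have hg : HasDerivAt (fun u => P (α₁ u)) (P' v₁) 0 := hP.comp_hasDerivAt 0 hα₁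
  have hsf : Tendsto s atTop (nhdsWithin (0:ℝ) {(0:ℝ)}ᶜ) := by
    rw [tendsto_nhdsWithin_iff]
    exact ⟨hs, Eventually.of_forall fun n => hs0 n⟩
  have htf : Tendsto t atTop (nhdsWithin (0:ℝ) {(0:ℝ)}ᶜ) := by
    rw [tendsto_nhdsWithin_iff]
    exact ⟨ht, Eventually.of_forall fun n => ht0 n⟩
  set A := fun n => slope (fun u => P (α₁ u)) 0 (s n) with hAdef
  set B := fun n => slope α₂ 0 (t n) with hBdef
  set c := fun n => t n / s n with hcdef
  have hA : Tendsto A atTop (nhds (P' v₁)) :=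
    (hasDerivAt_iff_tendsto_slope.mp hg).comp hsf
  have hB : Tendsto B atTop (nhds v₂) :=
    (hasDerivAt_iff_tendsto_slope.mp hα₂).comp htf
  have hAB : ∀ n, A n = c n • B n := by
    intro n
    simp only [hAdef, hBdef, hcdef, slope_def_module, sub_zero]
    rw [hPα n, hα₁0, hPz, ← hα₂0, smul_smul]
    congr 1
    rw [div_mul_eq_mul_div, mul_inv_cancel₀ (ht0 n), one_div]
  obtain ⟨φ, hφ1, hφv⟩ := exists_dual_vector ℝ v₂ (norm_ne_zero_iff.mpr hv₂)
  have hnz : ‖v₂‖ ≠ 0 := norm_ne_zero_iff.mpr hv₂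
  have hφB : Tendsto (fun n => φ (B n)) atTop (nhds ‖v₂‖) := by
    have h := (φ.continuous.tendsto v₂).comp hB
    simp [Function.comp, hφv] at h
    exact h
  have hφA : Tendsto (fun n => φ (A n)) atTop (nhds (φ (P' v₁))) :=
    (φ.continuous.tendsto _).comp hA
  have hc : Tendsto c atTop (nhds (φ (P' v₁) / ‖v₂‖)) := by
    have h1 : Tendsto (fun n => φ (A n) / φ (B n)) atTop
        (nhds (φ (P' v₁) / ‖v₂‖)) := hφA.div hφB hnz
    refine Tendsto.congr' ?_ h1
    filter_upwards [hφB.eventually_ne hnz] with n hn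
    rw [hAB n, map_smul, smul_eq_mul, mul_div_assoc, div_self hn, mul_one]
  have hlim : Tendsto A atTop (nhds ((φ (P' v₁) / ‖v₂‖) • v₂)) := by
    have := hc.smul hB
    exact this.congr fun n => (hAB n).symm
  exact ⟨_, tendsto_nhds_unique hA hlim⟩
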